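/- Let n = m·k with m, k positive integers such that m divides k, and let π be the uniform distribution on X = {1,…,n}. Define two partitions of X: O_i := {(i−1)k+1, …, ik} for i ∈ {1,…,m}, and C_j := {j, j+m, j+2m, …, j+(k−1)m} for j ∈ {1,…,m}. Let G₁ and G₂ be the Gibbs orbit kernels associated with the partitions (O_i) and (C_j) respectively. Then G₁·G₂ = Π; that is, (G₁G₂)(x,y) = 1/n for all x, y ∈ X, so the product of the two Gibbs orbit kernels is an exact sampler of the uniform distribution. -/

import Mathlib

open Matrix Finset

/-- Total mass of the orbit (block) `i` under `π`. -/
noncomputable def orbMass {n k : ℕ} (π : Fin n → ℝ) (part : Fin n → Fin k) (i : Fin k) : ℝ :=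
  ∑ z ∈ Finset.univ.filter (fun z => part z = i), π z

/-- The Gibbs orbit kernel. -/
noncomputable def gibbsKer {n k : ℕ} (π : Fin n → ℝ) (part : Fin n → Fin k) :
    Matrix (Fin n) (Fin n) ℝ :=
  Matrix.of fun x y => if part y = part x then π y / orbMass π part (part x) else 0


lemma fiberO_card {n m k : ℕ} (hk : 0 < k) (hn : n = m * k) (x : Fin n) :
    (Finset.univ.filter (fun z : Fin n => (z : ℕ) / k = (x : ℕ) / k)).card = k := by
  have hx : (x : ℕ) / k < m := by
    rw [Nat.div_lt_iff_lt_mul hk, ← hn]; exact x.isLt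
  have hb : ∀ t : Fin k, (x : ℕ)/k * k + (t : ℕ) < n := by
    intro t
    calc (x:ℕ)/k * k + (t:ℕ) < ((x:ℕ)/k + 1) * k := by
          rw [add_mul, one_mul]; exact Nat.add_lt_add_left t.isLt _
      _ ≤ m * k := Nat.mul_le_mul_right k hx
      _ = n := hn.symm
  have : (Finset.univ.filter (fun z : Fin n => (z : ℕ) / k = (x : ℕ) / k)).card
      = (Finset.univ : Finset (Fin k)).card := by
    refine Finset.card_nbij' (fun z => (⟨(z : ℕ) % k, Nat.mod_lt _ hk⟩ : Fin k))
      (fun t => (⟨(x : ℕ)/k * k + (t : ℕ), hb t⟩ : Fin n)) ?_ ?_ ?_ ?_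
    · intro z _; exact Finset.mem_univ _
    · intro t _
      simp only [Finset.mem_coe, Finset.mem_filter, Finset.mem_univ, true_and]
      show ((x:ℕ)/k * k + (t:ℕ)) / k = (x:ℕ)/k
      rw [mul_comm, Nat.mul_add_div hk, Nat.div_eq_of_lt t.isLt, add_zero]
    · intro z hz
      simp only [Finset.mem_coe, Finset.mem_filter, Finset.mem_univ, true_and] at hz
      apply Fin.ext
      show (x:ℕ)/k * k + (z:ℕ) % k = (z:ℕ)
      rw [← hz, Nat.div_add_mod']
    · intro t _
      apply Fin.ext
      show ((x:ℕ)/k * k + (t:ℕ)) % k = (t:ℕ)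
      rw [mul_comm, Nat.mul_add_mod, Nat.mod_eq_of_lt t.isLt]
  simpa using this


lemma fiberC_card {n m k : ℕ} (hm : 0 < m) (hn : n = m * k) (y : Fin n) :
    (Finset.univ.filter (fun z : Fin n => (z : ℕ) % m = (y : ℕ) % m)).card = k := by
  have hr : (y : ℕ) % m < m := Nat.mod_lt _ hm
  have hlt : ∀ z : Fin n, (z : ℕ) / m < k := by
    intro z
    rw [Nat.div_lt_iff_lt_mul hm, mul_comm, ← hn]; exact z.isLt
  have hb : ∀ s : Fin k, (y : ℕ) % m + (s : ℕ) * m < n := by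
    intro s
    calc (y:ℕ) % m + (s:ℕ) * m < ((s:ℕ) + 1) * m := by
          rw [add_mul, one_mul, add_comm]; exact Nat.add_lt_add_left hr _
      _ ≤ k * m := Nat.mul_le_mul_right m s.isLt
      _ = n := by rw [mul_comm, ← hn]
  have : (Finset.univ.filter (fun z : Fin n => (z : ℕ) % m = (y : ℕ) % m)).card
      = (Finset.univ : Finset (Fin k)).card := by
    refine Finset.card_nbij' (fun z => (⟨(z : ℕ) / m, hlt z⟩ : Fin k))
      (fun s => (⟨(y : ℕ) % m + (s : ℕ) * m, hb s⟩ : Fin n)) ?_ ?_ ?_ ?_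
    · intro z _; exact Finset.mem_univ _
    · intro s _
      simp only [Finset.mem_coe, Finset.mem_filter, Finset.mem_univ, true_and]
      show ((y:ℕ) % m + (s:ℕ) * m) % m = (y:ℕ) % m
      rw [Nat.add_mul_mod_self_right, Nat.mod_mod_of_dvd _ dvd_rfl]
    · intro z hz
      simp only [Finset.mem_coe, Finset.mem_filter, Finset.mem_univ, true_and] at hz
      apply Fin.ext
      show (y:ℕ) % m + (z:ℕ) / m * m = (z:ℕ)
      rw [← hz, Nat.mod_add_div']
    · intro s _
      apply Fin.ext
      show ((y:ℕ) % m + (s:ℕ) * m) / m = (s:ℕ)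
      rw [Nat.add_mul_div_right _ _ hm, Nat.div_eq_of_lt hr, zero_add]
  simpa using this

lemma fiberInt_card {n m k d : ℕ} (hm : 0 < m) (hk : 0 < k) (hn : n = m * k) (hd : k = m * d)
    (x y : Fin n) :
    (Finset.univ.filter (fun z : Fin n =>
      (z : ℕ) / k = (x : ℕ) / k ∧ (z : ℕ) % m = (y : ℕ) % m)).card = d := by
  have hr : (y : ℕ) % m < m := Nat.mod_lt _ hm
  have ha : (x : ℕ) / k < m := by
    rw [Nat.div_lt_iff_lt_mul hk, ← hn]; exact x.isLt
  have hmk : m ∣ k := ⟨d, hd⟩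
  have hfwd : ∀ z : Fin n, ((z : ℕ) % k) / m < d := by
    intro z
    rw [Nat.div_lt_iff_lt_mul hm, mul_comm d m, ← hd]
    exact Nat.mod_lt _ hk
  have hrtm : ∀ t : Fin d, (y : ℕ) % m + (t : ℕ) * m < k := by
    intro t
    calc (y:ℕ) % m + (t:ℕ) * m < ((t:ℕ) + 1) * m := by
          rw [add_mul, one_mul, add_comm]; exact Nat.add_lt_add_left hr _
      _ ≤ d * m := Nat.mul_le_mul_right m t.isLt
      _ = k := by rw [mul_comm, ← hd]
  have hb : ∀ t : Fin d, (x : ℕ)/k * k + ((y : ℕ) % m + (t : ℕ) * m) < n := by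
    intro t
    calc (x:ℕ)/k * k + ((y:ℕ) % m + (t:ℕ) * m) < ((x:ℕ)/k + 1) * k := by
          rw [add_mul, one_mul]; exact Nat.add_lt_add_left (hrtm t) _
      _ ≤ m * k := Nat.mul_le_mul_right k ha
      _ = n := hn.symm
  have : (Finset.univ.filter (fun z : Fin n =>
      (z : ℕ) / k = (x : ℕ) / k ∧ (z : ℕ) % m = (y : ℕ) % m)).card
      = (Finset.univ : Finset (Fin d)).card := by
    refine Finset.card_nbij' (fun z => (⟨((z : ℕ) % k) / m, hfwd z⟩ : Fin d))
      (fun t => (⟨(x : ℕ)/k * k + ((y : ℕ) % m + (t : ℕ) * m), hb t⟩ : Fin n)) ?_ ?_ ?_ ?_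
    · intro z _; exact Finset.mem_univ _
    · intro t _
      simp only [Finset.mem_coe, Finset.mem_filter, Finset.mem_univ, true_and]
      constructor
      · show ((x:ℕ)/k * k + ((y:ℕ) % m + (t:ℕ) * m)) / k = (x:ℕ)/k
        rw [mul_comm, Nat.mul_add_div hk, Nat.div_eq_of_lt (hrtm t), add_zero]
      · show ((x:ℕ)/k * k + ((y:ℕ) % m + (t:ℕ) * m)) % m = (y:ℕ) % m
        have h1 : (x:ℕ)/k * k + ((y:ℕ) % m + (t:ℕ) * m)
            = (y:ℕ) % m + ((x:ℕ)/k * d + (t:ℕ)) * m := by rw [hd]; ring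
        rw [h1, Nat.add_mul_mod_self_right, Nat.mod_mod_of_dvd _ dvd_rfl]
    · intro z hz
      simp only [Finset.mem_coe, Finset.mem_filter, Finset.mem_univ, true_and] at hz
      obtain ⟨hz1, hz2⟩ := hz
      apply Fin.ext
      show (x:ℕ)/k * k + ((y:ℕ) % m + ((z:ℕ) % k) / m * m) = (z:ℕ)
      have h2 : (z:ℕ) % k % m = (y:ℕ) % m := by
        rw [Nat.mod_mod_of_dvd _ hmk, hz2]
      rw [← h2, Nat.mod_add_div', ← hz1, Nat.div_add_mod']
    · intro t _
      apply Fin.ext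
      show ((x:ℕ)/k * k + ((y:ℕ) % m + (t:ℕ) * m)) % k / m = (t:ℕ)
      rw [mul_comm ((x:ℕ)/k) k, Nat.mul_add_mod, Nat.mod_eq_of_lt (hrtm t),
        Nat.add_mul_div_right _ _ hm, Nat.div_eq_of_lt hr, zero_add]
  simpa using this

/-- with `n = m·k`, `m ∣ k`, `π` uniform, the partition into `m`
consecutive blocks of size `k` (labelled by `pO x = x / k`, 0-indexed) and the
partition into the `m` residue classes mod `m` (labelled by `pC x = x % m`), the
product of the two Gibbs orbit kernels is the exact sampler `Π` of the uniform
distribution: `(G₁G₂)(x,y) = 1/n` for all `x, y`. -/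
theorem stmt19 {n m k : ℕ} (hm : 0 < m) (hk : 0 < k) (hn : n = m * k) (hmk : m ∣ k)
    (π : Fin n → ℝ) (hπ : ∀ x, π x = 1 / (n : ℝ))
    (pO : Fin n → Fin m) (hpO : ∀ x : Fin n, (pO x : ℕ) = (x : ℕ) / k)
    (pC : Fin n → Fin m) (hpC : ∀ x : Fin n, (pC x : ℕ) = (x : ℕ) % m) :
    ∀ x y : Fin n, (gibbsKer π pO * gibbsKer π pC) x y = 1 / (n : ℝ) := by
  obtain ⟨d, hd⟩ := hmk
  have hnpos : 0 < n := hn ▸ Nat.mul_pos hm hk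
  have hn0 : (n : ℝ) ≠ 0 := Nat.cast_ne_zero.mpr hnpos.ne'
  have hk0 : (k : ℝ) ≠ 0 := Nat.cast_ne_zero.mpr hk.ne'
  have hiff1 : ∀ z w : Fin n, pO z = pO w ↔ (z : ℕ) / k = (w : ℕ) / k := by
    intro z w; rw [Fin.ext_iff, hpO, hpO]
  have hiff2 : ∀ z w : Fin n, pC z = pC w ↔ (z : ℕ) % m = (w : ℕ) % m := by
    intro z w; rw [Fin.ext_iff, hpC, hpC]
  have hmO : ∀ w : Fin n, orbMass π pO (pO w) = (k : ℝ) / n := by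
    intro w
    unfold orbMass
    rw [show (Finset.univ.filter (fun z => pO z = pO w))
        = Finset.univ.filter (fun z : Fin n => (z : ℕ) / k = (w : ℕ) / k) from
      Finset.filter_congr fun z _ => by simp [hiff1]]
    rw [Finset.sum_congr rfl fun z _ => hπ z, Finset.sum_const, fiberO_card hk hn w,
      nsmul_eq_mul]
    field_simp
  have hmC : ∀ w : Fin n, orbMass π pC (pC w) = (k : ℝ) / n := by
    intro w
    unfold orbMass
    rw [show (Finset.univ.filter (fun z => pC z = pC w))
        = Finset.univ.filter (fun z : Fin n => (z : ℕ) % m = (w : ℕ) % m) from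
      Finset.filter_congr fun z _ => by simp [hiff2]]
    rw [Finset.sum_congr rfl fun z _ => hπ z, Finset.sum_const, fiberC_card hm hn w,
      nsmul_eq_mul]
    field_simp
  intro x y
  rw [Matrix.mul_apply]
  have hG : ∀ z : Fin n, gibbsKer π pO x z * gibbsKer π pC z y
      = if (z : ℕ) / k = (x : ℕ) / k ∧ (z : ℕ) % m = (y : ℕ) % m
        then (1 / (k : ℝ)) * (1 / (k : ℝ)) else 0 := by
    intro z
    simp only [gibbsKer, Matrix.of_apply]
    rw [if_congr (hiff1 z x) rfl rfl, if_congr (hiff2 y z) rfl rfl]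
    by_cases h1 : (z : ℕ) / k = (x : ℕ) / k
    · by_cases h2 : (z : ℕ) % m = (y : ℕ) % m
      · rw [if_pos h1, if_pos h2.symm, if_pos ⟨h1, h2⟩, hπ, hπ, hmO, hmC]
        field_simp
      · rw [if_neg (show ¬((y : ℕ) % m = (z : ℕ) % m) from fun h => h2 h.symm), mul_zero,
          if_neg (show ¬((z : ℕ) / k = (x : ℕ) / k ∧ (z : ℕ) % m = (y : ℕ) % m) from
            fun h => h2 h.2)]
    · rw [if_neg h1, zero_mul, if_neg (fun h => h1 h.1)]
  rw [Finset.sum_congr rfl fun z _ => hG z, ← Finset.sum_filter, Finset.sum_const,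
    fiberInt_card hm hk hn hd x y, nsmul_eq_mul]
  field_simp
  rw [hn, hd]
  push_cast
  ring
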